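/- Let P be a distribution on X × [C] with p_{s,y} := Pr_P[X_s = s, Y = y] > 0 for all s, y, and let Q be any fair base rate distribution with H(P,Q) ≤ ρ and Pr_Q[X_s = s, Y = y] > 0 for all s, y. Define k_s := Pr_Q[X_s = s], r_y := Pr_Q[Y = y], Q_{s,y} the conditional of Q given X_s = s, Y = y, and ρ_{s,y} := H(P_{s,y}, Q_{s,y}). Then k_s ≥ 0, r_y ≥ 0, Σ_s k_s = 1, Σ_y r_y = 1, Pr_Q[X_s = s, Y = y] = k_s r_y, Σ_{s,y} √(p_{s,y} k_s r_y)(1 − ρ_{s,y}²) ≥ 1 − ρ², and E_{(X,Y)∼Q}[ℓ(h(X),Y)] = Σ_{s,y} k_s r_y E_{(X,Y)∼Q_{s,y}}[ℓ(h(X),Y)] for any classifier h and nonnegative loss ℓ. -/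

import Mathlib

open MeasureTheory ProbabilityTheory

/-- The Hellinger distance `H(P,Q) = sqrt((1/2) ∫ (√p − √q)² dμ)`, computed with the
reference measure `μ := P + Q` (both `P` and `Q` are absolutely continuous with respect to
`P + Q`, and the Hellinger distance does not depend on the choice of reference measure). -/
noncomputable def hellinger {Z : Type*} [MeasurableSpace Z] (P Q : Measure Z) : ℝ :=
  Real.sqrt ((1 / 2) * ∫ z,
    (Real.sqrt ((P.rnDeriv (P + Q) z).toReal) - Real.sqrt ((Q.rnDeriv (P + Q) z).toReal)) ^ 2
      ∂(P + Q))

/-- The subpopulation `{(x, y') : x_s = s, y' = y}` of the sample space `X × Fin C`,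
determined by the sensitive attribute map `xs` and the label `y`. -/
def subpop {X : Type*} {S C : ℕ} (xs : X → Fin S) (s : Fin S) (y : Fin C) :
    Set (X × Fin C) := {p | xs p.1 = s ∧ p.2 = y}

/-- `Q` is a fair base rate distribution: for every label `y ∈ [C]`, the base rate
`b^Q_{s,y} = Pr_Q[Y = y | X_s = s]` is equal across all sensitive groups `s ∈ [S]`. -/
def IsFairBaseRate {X : Type*} [MeasurableSpace X] {S C : ℕ} (xs : X → Fin S)
    (Q : Measure (X × Fin C)) : Prop :=
  ∀ (y : Fin C) (i j : Fin S),
    (Q[|{p | xs p.1 = i}]) {p | p.2 = y} = (Q[|{p | xs p.1 = j}]) {p | p.2 = y}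

section Aux
variable {Z : Type*} [MeasurableSpace Z]

lemma sqrt_mul_le_add_half {a b : ℝ} (ha : 0 ≤ a) (hb : 0 ≤ b) :
    Real.sqrt (a * b) ≤ (a + b) / 2 := by
  nlinarith [sq_nonneg (Real.sqrt a - Real.sqrt b), Real.sq_sqrt ha, Real.sq_sqrt hb,
    Real.sqrt_mul_self ha, Real.sqrt_nonneg (a*b),
    Real.sqrt_le_sqrt (mul_self_nonneg (Real.sqrt a - Real.sqrt b)),
    Real.sqrt_mul ha b]

lemma integrable_sqrt_rnDeriv_mul (P Q : Measure Z) [IsFiniteMeasure P] [IsFiniteMeasure Q]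
    (m : Measure Z) :
    Integrable (fun z => Real.sqrt ((P.rnDeriv m z).toReal * (Q.rnDeriv m z).toReal)) m := by
  have hP : Integrable (fun z => (P.rnDeriv m z).toReal) m := Measure.integrable_toReal_rnDeriv
  have hQ : Integrable (fun z => (Q.rnDeriv m z).toReal) m := Measure.integrable_toReal_rnDeriv
  refine ((hP.add hQ).div_const 2).mono' ?_ ?_
  · exact ((Measure.measurable_rnDeriv P m).ennreal_toReal.mul
      (Measure.measurable_rnDeriv Q m).ennreal_toReal).sqrt.aestronglyMeasurable
  · refine Filter.Eventually.of_forall fun z => ?_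
    rw [Real.norm_eq_abs, abs_of_nonneg (Real.sqrt_nonneg _)]
    exact sqrt_mul_le_add_half ENNReal.toReal_nonneg ENNReal.toReal_nonneg

lemma one_sub_hellinger_sq (P Q : Measure Z) [IsProbabilityMeasure P] [IsProbabilityMeasure Q] :
    1 - hellinger P Q ^ 2
      = ∫ z, Real.sqrt ((P.rnDeriv (P + Q) z).toReal * (Q.rnDeriv (P + Q) z).toReal) ∂(P + Q) := by
  set ν := P + Q with hν
  set p : Z → ℝ := fun z => (P.rnDeriv ν z).toReal with hp
  set q : Z → ℝ := fun z => (Q.rnDeriv ν z).toReal with hq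
  have hPν : P ≪ ν := Measure.absolutelyContinuous_of_le (Measure.le_add_right le_rfl)
  have hQν : Q ≪ ν := Measure.absolutelyContinuous_of_le (Measure.le_add_left le_rfl)
  have hip : Integrable p ν := Measure.integrable_toReal_rnDeriv
  have hiq : Integrable q ν := Measure.integrable_toReal_rnDeriv
  have hisq : Integrable (fun z => Real.sqrt (p z * q z)) ν :=
    integrable_sqrt_rnDeriv_mul P Q ν
  have hpt : ∀ z, (Real.sqrt (p z) - Real.sqrt (q z)) ^ 2
      = p z + q z - 2 * Real.sqrt (p z * q z) := by
    intro z
    have h1 : Real.sqrt (p z) ^ 2 = p z := Real.sq_sqrt ENNReal.toReal_nonneg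
    have h2 : Real.sqrt (q z) ^ 2 = q z := Real.sq_sqrt ENNReal.toReal_nonneg
    have h3 : Real.sqrt (p z * q z) = Real.sqrt (p z) * Real.sqrt (q z) :=
      Real.sqrt_mul ENNReal.toReal_nonneg _
    rw [h3]; ring_nf; nlinarith [h1, h2]
  have hadd : Integrable (fun z => p z + q z) ν := hip.add hiq
  have hint : ∫ z, (Real.sqrt (p z) - Real.sqrt (q z)) ^ 2 ∂ν
      = (∫ z, p z ∂ν + ∫ z, q z ∂ν) - 2 * ∫ z, Real.sqrt (p z * q z) ∂ν := by
    simp_rw [hpt]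
    rw [integral_sub hadd (hisq.const_mul 2), integral_add hip hiq,
      integral_const_mul]
  have hPint : ∫ z, p z ∂ν = 1 := by
    rw [hp]; rw [Measure.integral_toReal_rnDeriv hPν]; simp
  have hQint : ∫ z, q z ∂ν = 1 := by
    rw [hq]; rw [Measure.integral_toReal_rnDeriv hQν]; simp
  have hsq : hellinger P Q ^ 2
      = (1 / 2) * ∫ z, (Real.sqrt (p z) - Real.sqrt (q z)) ^ 2 ∂ν := by
    rw [hellinger, Real.sq_sqrt]
    refine mul_nonneg (by norm_num) (integral_nonneg fun z => sq_nonneg _)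
  rw [hsq, hint, hPint, hQint]
  ring

lemma aff_change (P Q : Measure Z) [IsFiniteMeasure P] [IsFiniteMeasure Q]
    (m : Measure Z) [SigmaFinite m] (hPm : P ≪ m) (hQm : Q ≪ m) :
    ∫ z, Real.sqrt ((P.rnDeriv (P + Q) z).toReal * (Q.rnDeriv (P + Q) z).toReal) ∂(P + Q)
      = ∫ z, Real.sqrt ((P.rnDeriv m z).toReal * (Q.rnDeriv m z).toReal) ∂m := by
  set ν := P + Q with hν
  have hνm : ν ≪ m := by
    intro s hs
    simp [hν, Measure.add_apply, hPm hs, hQm hs]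
  have h1 : P.rnDeriv ν * ν.rnDeriv m =ᵐ[m] P.rnDeriv m :=
    Measure.rnDeriv_mul_rnDeriv (Measure.absolutelyContinuous_of_le (Measure.le_add_right le_rfl))
  have h2 : Q.rnDeriv ν * ν.rnDeriv m =ᵐ[m] Q.rnDeriv m :=
    Measure.rnDeriv_mul_rnDeriv (Measure.absolutelyContinuous_of_le (Measure.le_add_left le_rfl))
  have key : ∀ᵐ z ∂m, Real.sqrt ((P.rnDeriv m z).toReal * (Q.rnDeriv m z).toReal)
      = (ν.rnDeriv m z).toReal
          • Real.sqrt ((P.rnDeriv ν z).toReal * (Q.rnDeriv ν z).toReal) := by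
    filter_upwards [h1, h2] with z e1 e2
    rw [← e1, ← e2]
    simp only [Pi.mul_apply, ENNReal.toReal_mul, smul_eq_mul]
    set a := (P.rnDeriv ν z).toReal
    set b := (Q.rnDeriv ν z).toReal
    set d := (ν.rnDeriv m z).toReal
    have ha : 0 ≤ a := ENNReal.toReal_nonneg
    have hb : 0 ≤ b := ENNReal.toReal_nonneg
    have hd : 0 ≤ d := ENNReal.toReal_nonneg
    rw [show a * d * (b * d) = (a * b) * (d * d) by ring,
      Real.sqrt_mul (mul_nonneg ha hb), Real.sqrt_mul_self hd]
    ring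
  rw [integral_congr_ae key, MeasureTheory.integral_rnDeriv_smul hνm]

lemma cond_rnDeriv_ae (P μ : Measure Z) [IsFiniteMeasure P] [SigmaFinite μ]
    (hPμ : P ≪ μ) {A : Set Z} (hA : MeasurableSet A) (h0 : P A ≠ 0) :
    (P[|A]).rnDeriv (μ.restrict A)
      =ᵐ[μ.restrict A] fun z => (P A)⁻¹ * P.rnDeriv μ z := by
  have hres : P.restrict A = (μ.restrict A).withDensity (P.rnDeriv μ) := by
    conv_lhs => rw [← Measure.withDensity_rnDeriv_eq P μ hPμ]
    exact restrict_withDensity hA _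
  have h1 : ((P A)⁻¹ • P.restrict A).rnDeriv (μ.restrict A)
      =ᵐ[μ.restrict A] (P A)⁻¹ • (P.restrict A).rnDeriv (μ.restrict A) :=
    Measure.rnDeriv_smul_left_of_ne_top _ _ (ENNReal.inv_ne_top.mpr h0)
  have h2 : (P.restrict A).rnDeriv (μ.restrict A) =ᵐ[μ.restrict A] P.rnDeriv μ := by
    rw [hres]
    exact Measure.rnDeriv_withDensity _ (Measure.measurable_rnDeriv P μ)
  have hc : P[|A] = (P A)⁻¹ • P.restrict A := rfl
  rw [hc]
  filter_upwards [h1, h2] with z e1 e2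
  rw [e1]
  simp [e2]

lemma set_affinity (P Q : Measure Z) [IsProbabilityMeasure P] [IsProbabilityMeasure Q]
    {A : Set Z} (hA : MeasurableSet A) (hP0 : P A ≠ 0) (hQ0 : Q A ≠ 0) :
    ∫ z in A, Real.sqrt ((P.rnDeriv (P + Q) z).toReal * (Q.rnDeriv (P + Q) z).toReal) ∂(P + Q)
      = Real.sqrt ((P A).toReal * (Q A).toReal)
          * (1 - hellinger (P[|A]) (Q[|A]) ^ 2) := by
  set μ := P + Q with hμ
  set m := μ.restrict A with hm
  have hPμ : P ≪ μ := Measure.absolutelyContinuous_of_le (Measure.le_add_right le_rfl)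
  have hQμ : Q ≪ μ := Measure.absolutelyContinuous_of_le (Measure.le_add_left le_rfl)
  haveI : IsProbabilityMeasure (P[|A]) := cond_isProbabilityMeasure hP0
  haveI : IsProbabilityMeasure (Q[|A]) := cond_isProbabilityMeasure hQ0
  have hPA : P[|A] ≪ m := by
    have h1 : P[|A] = (P A)⁻¹ • P.restrict A := rfl
    rw [h1]
    exact Measure.smul_absolutelyContinuous.trans (hPμ.restrict A)
  have hQA : Q[|A] ≪ m := by
    have h1 : Q[|A] = (Q A)⁻¹ • Q.restrict A := rfl
    rw [h1]
    exact Measure.smul_absolutelyContinuous.trans (hQμ.restrict A)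
  set a := (P A).toReal with hadef
  set b := (Q A).toReal with hbdef
  have ha : 0 < a := ENNReal.toReal_pos hP0 (measure_ne_top P A)
  have hb : 0 < b := ENNReal.toReal_pos hQ0 (measure_ne_top Q A)
  have hcongr : ∀ᵐ z ∂m,
      Real.sqrt (((P[|A]).rnDeriv m z).toReal * ((Q[|A]).rnDeriv m z).toReal)
        = (Real.sqrt (a * b))⁻¹
            * Real.sqrt ((P.rnDeriv μ z).toReal * (Q.rnDeriv μ z).toReal) := by
    filter_upwards [cond_rnDeriv_ae P μ hPμ hA hP0, cond_rnDeriv_ae Q μ hQμ hA hQ0]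
      with z e1 e2
    rw [e1, e2]
    simp only [ENNReal.toReal_mul, ENNReal.toReal_inv]
    set p := (P.rnDeriv μ z).toReal
    set q := (Q.rnDeriv μ z).toReal
    have hp : 0 ≤ p := ENNReal.toReal_nonneg
    have hq : 0 ≤ q := ENNReal.toReal_nonneg
    rw [show a⁻¹ * p * (b⁻¹ * q) = (a * b)⁻¹ * (p * q) by ring,
      Real.sqrt_mul (inv_nonneg.mpr (mul_nonneg ha.le hb.le)), Real.sqrt_inv]
  have hval : 1 - hellinger (P[|A]) (Q[|A]) ^ 2
      = (Real.sqrt (a * b))⁻¹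
          * ∫ z in A, Real.sqrt ((P.rnDeriv μ z).toReal * (Q.rnDeriv μ z).toReal) ∂μ := by
    rw [one_sub_hellinger_sq (P[|A]) (Q[|A]), aff_change (P[|A]) (Q[|A]) m hPA hQA,
      integral_congr_ae hcongr, integral_const_mul]
  rw [hval]
  have hs : Real.sqrt (a * b) ≠ 0 := (Real.sqrt_pos.mpr (mul_pos ha hb)).ne'
  field_simp
  rfl
end Aux

/-- properties of a feasible shifted distribution under general shifting.
`P` is a probability distribution on `X × Fin C` with all subpopulation probabilities
positive, and `Q` is any fair base rate distribution with `H(P,Q) ≤ ρ` and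
`Pr_Q[X_s = s, Y = y] > 0` for all `s, y`.  With `k_s = Pr_Q[X_s = s]`, `r_y = Pr_Q[Y = y]`,
`Q_{s,y}` the conditional of `Q` on the subpopulation, and
`ρ_{s,y} = H(P_{s,y}, Q_{s,y})`, we have nonnegativity and unity of `k, r`,
`Pr_Q[X_s = s, Y = y] = k_s r_y`, the distance inequality
`Σ_{s,y} √(p_{s,y} k_s r_y)(1 − ρ_{s,y}²) ≥ 1 − ρ²`, and the loss decomposition
`E_Q[ℓ(h(X),Y)] = Σ_{s,y} k_s r_y E_{Q_{s,y}}[ℓ(h(X),Y)]` for any classifier `h` and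
nonnegative loss `ℓ`. -/
theorem statement_9 {X : Type*} [MeasurableSpace X] {S C : ℕ}
    (xs : X → Fin S) (hxs : Measurable xs)
    (P Q : Measure (X × Fin C)) [IsProbabilityMeasure P] [IsProbabilityMeasure Q]
    (hpos : ∀ s y, 0 < P (subpop xs s y))
    (hQpos : ∀ s y, 0 < Q (subpop xs s y))
    (ρ : ℝ)
    (hfair : IsFairBaseRate xs Q)
    (hdist : hellinger P Q ≤ ρ) :
    let k : Fin S → ℝ := fun s => (Q {p | xs p.1 = s}).toReal
    let r : Fin C → ℝ := fun y => (Q {p | p.2 = y}).toReal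
    let ρs : Fin S → Fin C → ℝ :=
      fun s y => hellinger (P[|subpop xs s y]) (Q[|subpop xs s y])
    (∀ s, 0 ≤ k s) ∧ (∀ y, 0 ≤ r y) ∧ (∑ s, k s = 1) ∧ (∑ y, r y = 1) ∧
    (∀ s y, (Q (subpop xs s y)).toReal = k s * r y) ∧
    1 - ρ ^ 2 ≤ ∑ s, ∑ y,
      Real.sqrt ((P (subpop xs s y)).toReal * k s * r y) * (1 - ρs s y ^ 2) ∧
    ∀ (h : X → Fin C), Measurable h → ∀ (ℓ : Fin C → Fin C → ℝ), (∀ a b, 0 ≤ ℓ a b) →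
      ∫ p, ℓ (h p.1) p.2 ∂Q =
        ∑ s, ∑ y, k s * r y * ∫ p, ℓ (h p.1) p.2 ∂(Q[|subpop xs s y]) := by
  intro k r ρs
  set B : Fin S → Set (X × Fin C) := fun s => {p | xs p.1 = s} with hB
  set D : Fin C → Set (X × Fin C) := fun y => {p | p.2 = y} with hD
  have hBmeas : ∀ s, MeasurableSet (B s) := fun s =>
    (hxs.comp measurable_fst) (measurableSet_singleton s)
  have hDmeas : ∀ y, MeasurableSet (D y) := fun y =>
    measurable_snd (measurableSet_singleton y)
  have hAmeas : ∀ s y, MeasurableSet (subpop xs s y) := fun s y =>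
    (hBmeas s).inter (hDmeas y)
  -- partition facts
  have hBdisj : Pairwise (Function.onFun Disjoint B) := by
    intro i j hij
    refine Set.disjoint_left.mpr fun p hpi hpj => hij ?_
    exact hpi.symm.trans hpj
  have hBsum : ∑ s, Q (B s) = 1 := by
    have hU : ⋃ s, B s = Set.univ := by
      ext p; simp [hB]
    rw [← tsum_fintype (L := .unconditional _), ← measure_iUnion hBdisj hBmeas, hU, measure_univ]
  have hDdisj : Pairwise (Function.onFun Disjoint D) := by
    intro i j hij
    refine Set.disjoint_left.mpr fun p hpi hpj => hij ?_
    exact hpi.symm.trans hpj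
  have hDsum : ∑ y, Q (D y) = 1 := by
    have hU : ⋃ y, D y = Set.univ := by
      ext p; simp [hD]
    rw [← tsum_fintype (L := .unconditional _), ← measure_iUnion hDdisj hDmeas, hU, measure_univ]
  -- positivity of marginals
  have hQA0 : ∀ s y, Q (subpop xs s y) ≠ 0 := fun s y => (hQpos s y).ne'
  have hPA0 : ∀ s y, P (subpop xs s y) ≠ 0 := fun s y => (hpos s y).ne'
  have hBQ0 : ∀ s, Q (B s) ≠ 0 := by
    intro s hzero
    rcases isEmpty_or_nonempty (Fin C) with hC | hC
    · have hu : (Set.univ : Set (X × Fin C)) = ∅ := by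
        ext p; exact (hC.1 p.2).elim
      have := measure_univ (μ := Q)
      rw [hu] at this
      simp at this
    · obtain ⟨y⟩ := hC
      exact hQA0 s y (le_antisymm (hzero ▸ measure_mono (Set.inter_subset_left)) zero_le)
  -- the product identity in ℝ≥0∞
  have hprod : ∀ s y, Q (subpop xs s y) = Q (B s) * Q (D y) := by
    intro s y
    -- common base rate
    have hc : ∀ i j : Fin S, (Q (B i))⁻¹ * Q (subpop xs i y) = (Q (B j))⁻¹ * Q (subpop xs j y) := by
      intro i j
      have := hfair y i j
      rwa [cond_apply (hBmeas i) Q (D y), cond_apply (hBmeas j) Q (D y)] at this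
    have hmul : ∀ i : Fin S, Q (subpop xs i y) = Q (B i) * ((Q (B s))⁻¹ * Q (subpop xs s y)) := by
      intro i
      rw [← hc i s, ← mul_assoc, ENNReal.mul_inv_cancel (hBQ0 i) (measure_ne_top Q _), one_mul]
    have hDdecomp : Q (D y) = ∑ i, Q (subpop xs i y) := by
      have hU : ⋃ i, subpop xs i y = D y := by
        ext p
        simp [subpop, hD]
      have hdisj : Pairwise (Function.onFun Disjoint fun i => subpop xs i y) := by
        intro i j hij
        refine Set.disjoint_left.mpr fun p hpi hpj => hij ?_
        exact hpi.1.symm.trans hpj.1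
      rw [← hU, measure_iUnion hdisj (fun i => hAmeas i y), tsum_fintype]
    have hDy : Q (D y) = (Q (B s))⁻¹ * Q (subpop xs s y) := by
      rw [hDdecomp]
      calc ∑ i, Q (subpop xs i y)
          = ∑ i, Q (B i) * ((Q (B s))⁻¹ * Q (subpop xs s y)) := by
            exact Finset.sum_congr rfl fun i _ => hmul i
        _ = (∑ i, Q (B i)) * ((Q (B s))⁻¹ * Q (subpop xs s y)) := by
            rw [Finset.sum_mul]
        _ = (Q (B s))⁻¹ * Q (subpop xs s y) := by rw [hBsum, one_mul]
    rw [hDy, ← mul_assoc, ENNReal.mul_inv_cancel (hBQ0 s) (measure_ne_top Q _), one_mul]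
  have h5 : ∀ s y, (Q (subpop xs s y)).toReal = k s * r y := by
    intro s y
    rw [hprod s y, ENNReal.toReal_mul]
  -- splitting integrals over the partition
  have hsplit : ∀ (ν : Measure (X × Fin C)) (g : X × Fin C → ℝ), Integrable g ν →
      ∫ p, g p ∂ν = ∑ s, ∑ y, ∫ p in subpop xs s y, g p ∂ν := by
    intro ν g hg
    have hU : ⋃ i ∈ (Finset.univ : Finset (Fin S × Fin C)), subpop xs i.1 i.2 = Set.univ := by
      ext p
      simp only [Set.mem_iUnion, Set.mem_univ, iff_true, Finset.mem_univ, Set.iUnion_true]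
      exact ⟨(xs p.1, p.2), rfl, rfl⟩
    have hdisj : (↑(Finset.univ : Finset (Fin S × Fin C)) : Set (Fin S × Fin C)).Pairwise
        (Function.onFun Disjoint fun i => subpop xs i.1 i.2) := by
      intro i _ j _ hij
      refine Set.disjoint_left.mpr fun p hpi hpj => hij ?_
      exact Prod.ext (hpi.1.symm.trans hpj.1) (hpi.2.symm.trans hpj.2)
    rw [← setIntegral_univ, ← hU,
      integral_biUnion_finset Finset.univ (fun i _ => hAmeas i.1 i.2) hdisj
        (fun i _ => hg.integrableOn), Fintype.sum_prod_type]
  refine ⟨fun s => ENNReal.toReal_nonneg, fun y => ENNReal.toReal_nonneg, ?_, ?_, h5, ?_, ?_⟩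
  · rw [show (∑ s, k s) = (∑ s, Q (B s)).toReal from
      (ENNReal.toReal_sum fun a _ => measure_ne_top Q _).symm, hBsum]
    simp
  · rw [show (∑ y, r y) = (∑ y, Q (D y)).toReal from
      (ENNReal.toReal_sum fun a _ => measure_ne_top Q _).symm, hDsum]
    simp
  · -- the Hellinger inequality
    have hstep1 : 1 - ρ ^ 2 ≤ 1 - hellinger P Q ^ 2 := by
      have h0 : 0 ≤ hellinger P Q := Real.sqrt_nonneg _
      have := pow_le_pow_left₀ h0 hdist 2
      linarith
    have hint : Integrable
        (fun z => Real.sqrt ((P.rnDeriv (P + Q) z).toReal * (Q.rnDeriv (P + Q) z).toReal))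
        (P + Q) := integrable_sqrt_rnDeriv_mul P Q (P + Q)
    have hstep2 := one_sub_hellinger_sq P Q
    have hstep3 := hsplit (P + Q) _ hint
    have hstep4 : ∀ s y,
        ∫ z in subpop xs s y,
          Real.sqrt ((P.rnDeriv (P + Q) z).toReal * (Q.rnDeriv (P + Q) z).toReal) ∂(P + Q)
        = Real.sqrt ((P (subpop xs s y)).toReal * k s * r y) * (1 - ρs s y ^ 2) := by
      intro s y
      rw [set_affinity P Q (hAmeas s y) (hPA0 s y) (hQA0 s y), h5 s y, ← mul_assoc]
    calc 1 - ρ ^ 2 ≤ 1 - hellinger P Q ^ 2 := hstep1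
      _ = ∑ s, ∑ y, ∫ z in subpop xs s y,
            Real.sqrt ((P.rnDeriv (P + Q) z).toReal * (Q.rnDeriv (P + Q) z).toReal)
              ∂(P + Q) := by rw [hstep2, hstep3]
      _ = ∑ s, ∑ y, Real.sqrt ((P (subpop xs s y)).toReal * k s * r y) * (1 - ρs s y ^ 2) := by
          exact Finset.sum_congr rfl fun s _ => Finset.sum_congr rfl fun y _ => hstep4 s y
  · -- the loss decomposition
    intro h hm ℓ hℓ
    set f : X × Fin C → ℝ := fun p => ℓ (h p.1) p.2 with hf
    have hfmeas : Measurable f := by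
      exact (measurable_of_countable (fun q : Fin C × Fin C => ℓ q.1 q.2)).comp
        (((hm.comp measurable_fst)).prodMk measurable_snd)
    have hfint : Integrable f Q := by
      refine (integrable_const (∑ a : Fin C, ∑ b : Fin C, |ℓ a b|)).mono'
        hfmeas.aestronglyMeasurable (Filter.Eventually.of_forall fun p => ?_)
      rw [Real.norm_eq_abs]
      calc |ℓ (h p.1) p.2| ≤ ∑ b : Fin C, |ℓ (h p.1) b| :=
            Finset.single_le_sum (f := fun b => |ℓ (h p.1) b|)
              (fun b _ => abs_nonneg _) (Finset.mem_univ p.2)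
        _ ≤ ∑ a : Fin C, ∑ b : Fin C, |ℓ a b| :=
            Finset.single_le_sum (f := fun a => ∑ b : Fin C, |ℓ a b|)
              (fun a _ => Finset.sum_nonneg fun b _ => abs_nonneg _) (Finset.mem_univ (h p.1))
    have hper : ∀ s y, ∫ p in subpop xs s y, f p ∂Q
        = k s * r y * ∫ p, f p ∂(Q[|subpop xs s y]) := by
      intro s y
      have hc : Q[|subpop xs s y] = (Q (subpop xs s y))⁻¹ • Q.restrict (subpop xs s y) := rfl
      rw [hc, integral_smul_measure, ENNReal.toReal_inv, smul_eq_mul, ← mul_assoc,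
        ← h5 s y, mul_inv_cancel₀, one_mul]
      exact ENNReal.toReal_ne_zero.mpr ⟨hQA0 s y, measure_ne_top Q _⟩
    rw [hsplit Q f hfint]
    exact Finset.sum_congr rfl fun s _ => Finset.sum_congr rfl fun y _ => hper s y
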